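/- Let X be an essentially bounded random variable and set δ(X) := M(X|𝓗) − m(X|𝓗) and g₀ := (M(X|𝓗) + m(X|𝓗))/2. Then (1) M(|X − g₀| |𝓗) = δ(X)/2 P-a.s., and (2) for every 𝓗-measurable essentially bounded random variable g, δ(X)/2 ≤ M(|X − g| |𝓗) P-a.s. In other words, the 𝓗-conditional L^∞-distance from X to the 𝓗-measurable random variables equals δ(X)/2 and is attained at g₀. -/

import Mathlib

open MeasureTheory Filter

/-- A real random variable is essentially bounded w.r.t. the measure `P`. -/
def EssBdd {Ω : Type*} {F : MeasurableSpace Ω} (P : @Measure Ω F) (X : Ω → ℝ) : Prop :=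
  ∃ C : ℝ, ∀ᵐ ω ∂P, |X ω| ≤ C

/-- `Y` is the conditional essential supremum `M(X|H)` of `X` given the sub-σ-algebra `H`:
`Y` is `H`-measurable, essentially bounded, `X ≤ Y` a.s., and `Y` is a.s. below every
`H`-measurable `Z` with `X ≤ Z` a.s. -/
def IsCondEssSup {Ω : Type*} {F : MeasurableSpace Ω} (P : @Measure Ω F)
    (H : MeasurableSpace Ω) (X Y : Ω → ℝ) : Prop :=
  Measurable[H] Y ∧ EssBdd P Y ∧ (∀ᵐ ω ∂P, X ω ≤ Y ω) ∧
    ∀ Z : Ω → ℝ, Measurable[H] Z → (∀ᵐ ω ∂P, X ω ≤ Z ω) → ∀ᵐ ω ∂P, Y ω ≤ Z ω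

/-- `Y` is the conditional essential infimum `m(X|H) = -M(-X|H)`. -/
def IsCondEssInf {Ω : Type*} {F : MeasurableSpace Ω} (P : @Measure Ω F)
    (H : MeasurableSpace Ω) (X Y : Ω → ℝ) : Prop :=
  IsCondEssSup P H (fun ω => -X ω) (fun ω => -Y ω)

/-- The conditional `L^∞` distance from `X` to the `H`-measurable random variables equals
`δ(X)/2 = (M(X|H) − m(X|H))/2` and is attained at `g₀ = (M(X|H) + m(X|H))/2`. -/
theorem dist_to_measurable_eq_half_delta {Ω : Type*} [F : MeasurableSpace Ω]
    (P : Measure Ω) [IsProbabilityMeasure P] (H : MeasurableSpace Ω) (hH : H ≤ F)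
    (X MX mX D : Ω → ℝ) (hX : EssBdd P X)
    (hMX : IsCondEssSup P H X MX) (hmX : IsCondEssInf P H X mX)
    (hD : IsCondEssSup P H (fun ω => |X ω - (MX ω + mX ω) / 2|) D) :
    (D =ᵐ[P] fun ω => (MX ω - mX ω) / 2) ∧
      ∀ g Dg : Ω → ℝ, Measurable[H] g → EssBdd P g →
        IsCondEssSup P H (fun ω => |X ω - g ω|) Dg →
        ∀ᵐ ω ∂P, (MX ω - mX ω) / 2 ≤ Dg ω := by
  obtain ⟨hMXm, hMXb, hXleM, hMmin⟩ := hMX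
  obtain ⟨hmXm', hmXb', hmleX', hmmin'⟩ := hmX
  have hmXm : Measurable[H] mX := by
    have h := hmXm'.neg
    simpa [Pi.neg_def] using h
  have hmleX : ∀ᵐ ω ∂P, mX ω ≤ X ω := by
    filter_upwards [hmleX'] with ω h; linarith
  have key : ∀ g Dg : Ω → ℝ, Measurable[H] g →
      IsCondEssSup P H (fun ω => |X ω - g ω|) Dg →
      ∀ᵐ ω ∂P, (MX ω - mX ω) / 2 ≤ Dg ω := by
    intro g Dg hgm hDg
    obtain ⟨hDgm, hDgb, hDgle, hDgmin⟩ := hDg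
    have h1 : ∀ᵐ ω ∂P, MX ω ≤ g ω + Dg ω := by
      apply hMmin _ (hgm.add hDgm)
      filter_upwards [hDgle] with ω h
      have := le_abs_self (X ω - g ω)
      simp only [Pi.add_apply]
      linarith
    have h2 : ∀ᵐ ω ∂P, -mX ω ≤ Dg ω - g ω := by
      apply hmmin' _ (hDgm.sub hgm)
      filter_upwards [hDgle] with ω h
      have := neg_abs_le (X ω - g ω)
      simp only [Pi.sub_apply]
      linarith
    filter_upwards [h1, h2] with ω h1 h2
    linarith
  have hg0m : Measurable[H] (fun ω => (MX ω + mX ω) / 2) :=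
    (hMXm.add hmXm).div_const 2
  have hle : ∀ᵐ ω ∂P, D ω ≤ (MX ω - mX ω) / 2 := by
    apply hD.2.2.2 _ ((hMXm.sub hmXm).div_const 2)
    filter_upwards [hXleM, hmleX] with ω h1 h2
    rw [abs_le]
    constructor <;> simp only [Pi.sub_apply] <;> linarith
  have hge := key _ D hg0m hD
  refine ⟨?_, fun g Dg hgm _ hDg => key g Dg hgm hDg⟩
  filter_upwards [hle, hge] with ω h1 h2
  exact le_antisymm h1 h2
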